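/- arXiv:2008.10260 — 2 statements merged into one kernel-verified Lean document; each statement's English description precedes it below -/
import Mathlib

section
/- Assume CH and fix a κ-nice graph X = (κ, E) and an ω-assignment F : κ → [κ]^ω. Let ℙ be the poset of countable good colorings p of induced subgraphs with ⟨X,F⟩-complete countable domain and p(α) ∈ F(α), ordered by reverse inclusion. Then: (a) if p, q ∈ ℙ and p ∪ q is a function, then p ∪ q ∈ ℙ and is the greatest lower bound of p and q; (b) ℙ satisfies the ω₂-chain condition. -/
open Cardinal

/-- A good coloring of a graph: adjacent vertices get distinct colors. -/
def IsGoodColoring {V : Type} {C : Type} (G : SimpleGraph V) (f : V → C) : Prop :=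
  ∀ ⦃x y : V⦄, G.Adj x y → f x ≠ f y

/-- `G` is `κ`-list-colorable: every assignment of lists of size `κ`
admits a good coloring choosing from the lists. -/
def ListColorable {V : Type} (G : SimpleGraph V) (κ : Cardinal) : Prop :=
  ∀ (C : Type) (F : V → Set C), (∀ x, #(F x) = κ) →
    ∃ f : V → C, IsGoodColoring G f ∧ ∀ x, f x ∈ F x

/-- The list-chromatic number of `G`: the least cardinal `κ` such that every
`κ`-assignment admits a good coloring from the lists. -/
noncomputable def listChromatic {V : Type} (G : SimpleGraph V) : Cardinal :=
  sInf {κ : Cardinal | ListColorable G κ}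

/-- The coloring number of `G`: the least cardinal `κ` such that there is a
well-ordering of the vertices in which every vertex has fewer than `κ`
neighbors preceding it. -/
noncomputable def colNum {V : Type} (G : SimpleGraph V) : Cardinal :=
  sInf {κ : Cardinal | ∃ r : V → V → Prop, IsWellOrder V r ∧
    ∀ x : V, #{y : V | G.Adj x y ∧ r y x} < κ}

/-- A set `x` of vertices is `⟨X,F⟩`-complete: it is closed under earlier
neighbors and lists, and contains every vertex with infinitely many neighbors
in `x`. -/
def XFComplete {V : Type} [LinearOrder V] (G : SimpleGraph V) (F : V → Set V)
    (x : Set V) : Prop :=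
  (∀ a ∈ x, {b : V | G.Adj a b ∧ b < a} ⊆ x ∧ F a ⊆ x) ∧
  ∀ b : V, (x ∩ {c : V | G.Adj b c}).Infinite → b ∈ x

/-- The domain of a set of pairs, viewed as a partial function. -/
def pdom {V : Type} (p : Set (V × V)) : Set V := {a | ∃ b, (a, b) ∈ p}

/-- Conditions of the poset `ℙ(X,F)`: countable good partial colorings (coded as
functional sets of pairs) with `⟨X,F⟩`-complete domain and values in the lists.
The order is reverse inclusion. -/
def IsCondition {V : Type} [LinearOrder V] (G : SimpleGraph V) (F : V → Set V)
    (p : Set (V × V)) : Prop :=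
  (∀ a b b', (a, b) ∈ p → (a, b') ∈ p → b = b') ∧
  (pdom p).Countable ∧
  XFComplete G F (pdom p) ∧
  (∀ a b, (a, b) ∈ p → b ∈ F a) ∧
  (∀ a b a' b', (a, b) ∈ p → (a', b') ∈ p → G.Adj a a' → b ≠ b')

/- ----------------- Auxiliary material for the proof ----------------- -/

section Aux

open Set

universe u

/-- Transfer CH down to universe `0`. -/
lemma myCH_zero (hCH : 2 ^ ℵ₀ = Cardinal.aleph.{u} 1) :
    (2 : Cardinal.{0}) ^ ℵ₀ = Cardinal.aleph 1 := by
  have h : Cardinal.lift.{u} ((2 : Cardinal.{0}) ^ ℵ₀) =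
      Cardinal.lift.{u} (Cardinal.aleph.{0} 1) := by
    rw [lift_power, lift_aleph0, lift_aleph]
    simp only [lift_ofNat, Ordinal.lift_one]
    exact hCH
  exact lift_inj.mp h

lemma my_aleph1_pow_aleph0 (hCH : (2:Cardinal.{0}) ^ ℵ₀ = Cardinal.aleph 1) :
    (Cardinal.aleph.{0} 1) ^ (ℵ₀ : Cardinal) = Cardinal.aleph 1 := by
  conv_lhs => rw [← hCH]
  rw [← power_mul, aleph0_mul_aleph0, hCH]

/-- Under CH, a set of size ≤ ℵ₁ has at most ℵ₁ countable subsets. -/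
lemma my_mk_countable_subsets_le {α : Type} (hCH : (2:Cardinal.{0}) ^ ℵ₀ = Cardinal.aleph 1)
    (S : Set α) (hS : #S ≤ Cardinal.aleph 1) :
    #{c : Set α // c ⊆ S ∧ c.Countable} ≤ Cardinal.aleph 1 := by
  classical
  set f : (ℕ → Option S) → {c : Set α // c ⊆ S ∧ c.Countable} := fun g =>
    ⟨⋃ n, (g n).elim ∅ (fun y => {(y : α)}), by
      intro x hx
      simp only [mem_iUnion] at hx
      obtain ⟨n, hn⟩ := hx
      cases h : g n with
      | none => rw [h] at hn; simp at hn
      | some y => rw [h] at hn; simp at hn; subst hn; exact y.2,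
      countable_iUnion fun n => by cases g n <;> simp⟩ with hf
  have hsurj : Function.Surjective f := by
    rintro ⟨c, hcS, hcC⟩
    rcases c.eq_empty_or_nonempty with rfl | hne
    · exact ⟨fun _ => none, by simp [hf]⟩
    · obtain ⟨e, he⟩ := Set.Countable.exists_eq_range hcC hne
      refine ⟨fun n => some ⟨e n, hcS (by rw [he]; exact mem_range_self n)⟩, ?_⟩
      simp only [hf, Subtype.mk.injEq]
      ext x
      simp only [Option.elim, mem_iUnion, mem_singleton_iff]
      rw [he, mem_range]
      exact ⟨fun ⟨n,h⟩ => ⟨n, h.symm⟩, fun ⟨n,h⟩ => ⟨n, h.symm⟩⟩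
  calc #{c : Set α // c ⊆ S ∧ c.Countable} ≤ #(ℕ → Option S) := mk_le_of_surjective hsurj
    _ = #(Option S) ^ (ℵ₀ : Cardinal) := by rw [← power_def]; simp
    _ ≤ (Cardinal.aleph 1) ^ (ℵ₀ : Cardinal) := by
        apply power_le_power_right
        rw [mk_option]
        calc #S + 1 ≤ Cardinal.aleph 1 + Cardinal.aleph 1 :=
              add_le_add hS (one_lt_aleph0.le.trans (aleph0_le_aleph 1))
          _ = Cardinal.aleph 1 := add_eq_self (aleph0_le_aleph 1)
    _ = Cardinal.aleph 1 := my_aleph1_pow_aleph0 hCH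

variable {V : Type}

lemma my_pdom_union (p q : Set (V × V)) : pdom (p ∪ q) = pdom p ∪ pdom q := by
  ext a; simp [pdom, exists_or]

/-- A condition is a countable set of pairs. -/
lemma my_cond_countable [LinearOrder V] {G : SimpleGraph V} {F : V → Set V}
    {p : Set (V × V)} (hp : IsCondition G F p) : p.Countable := by
  obtain ⟨h1, h2, -⟩ := hp
  have : Countable (pdom p) := h2.to_subtype
  have hinj : Function.Injective (fun x : p => (⟨x.1.1, ⟨x.1.2, x.2⟩⟩ : pdom p)) := by
    rintro ⟨⟨a, b⟩, hab⟩ ⟨⟨a', b'⟩, hab'⟩ h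
    simp only [Subtype.mk.injEq] at h
    obtain rfl : a = a' := congrArg Subtype.val h
    simp only [Subtype.mk.injEq, Prod.mk.injEq]
    exact ⟨trivial, h1 a b b' hab hab'⟩
  have : Countable p := Function.Injective.countable hinj
  exact countable_coe_iff.mp this

/-- Part (a): the union of two compatible conditions is a condition. -/
lemma my_union_cond [LinearOrder V] (G : SimpleGraph V) (F : V → Set V)
    (p q : Set (V × V)) (hp : IsCondition G F p) (hq : IsCondition G F q)
    (hfun : ∀ a b b', (a, b) ∈ p ∪ q → (a, b') ∈ p ∪ q → b = b') :
    IsCondition G F (p ∪ q) := by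
  obtain ⟨hp1, hp2, ⟨hp3a, hp3b⟩, hp4, hp5⟩ := hp
  obtain ⟨hq1, hq2, ⟨hq3a, hq3b⟩, hq4, hq5⟩ := hq
  have cross : ∀ a b a' b', (a, b) ∈ p → (a', b') ∈ q → G.Adj a a' → b ≠ b' := by
    intro a b a' b' hab ha'b' hadj
    rcases lt_or_gt_of_ne hadj.ne' with hlt | hlt
    · have ha'p : a' ∈ pdom p := (hp3a a ⟨b, hab⟩).1 ⟨hadj, hlt⟩
      obtain ⟨b'', hb''⟩ := ha'p
      have : b'' = b' := hfun a' b'' b' (Or.inl hb'') (Or.inr ha'b')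
      exact this ▸ hp5 a b a' b'' hab hb'' hadj
    · have hap : a ∈ pdom q := (hq3a a' ⟨b', ha'b'⟩).1 ⟨hadj.symm, hlt⟩
      obtain ⟨b'', hb''⟩ := hap
      have : b'' = b := hfun a b'' b (Or.inr hb'') (Or.inl hab)
      exact this ▸ hq5 a b'' a' b' hb'' ha'b' hadj
  refine ⟨hfun, ?_, ⟨?_, ?_⟩, ?_, ?_⟩
  · rw [my_pdom_union]; exact hp2.union hq2
  · rw [my_pdom_union]
    rintro a (ha | ha)
    · exact ⟨(hp3a a ha).1.trans subset_union_left, (hp3a a ha).2.trans subset_union_left⟩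
    · exact ⟨(hq3a a ha).1.trans subset_union_right, (hq3a a ha).2.trans subset_union_right⟩
  · rw [my_pdom_union]
    intro b hb
    rw [union_inter_distrib_right] at hb
    rcases (by by_contra h; push_neg at h
               exact hb ((h.1).union h.2) :
        (pdom p ∩ {c | G.Adj b c}).Infinite ∨ (pdom q ∩ {c | G.Adj b c}).Infinite) with h | h
    · exact Or.inl (hp3b b h)
    · exact Or.inr (hq3b b h)
  · rintro a b (h | h)
    · exact hp4 a b h
    · exact hq4 a b h
  · rintro a b a' b' (h1 | h1) (h2 | h2) hadj
    · exact hp5 a b a' b' h1 h2 hadj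
    · exact cross a b a' b' h1 h2 hadj
    · exact fun e => cross a' b' a b h2 h1 hadj.symm e.symm
    · exact hq5 a b a' b' h1 h2 hadj

open Classical in
/-- Chosen witness in `A` realizing a given trace `s` on a countable set `c`. -/
noncomputable def myWit (A : Set (Set (V × V))) (c : Set V) (s : Set (V × V)) :
    Set (V × V) :=
  if h : ∃ p ∈ A, p ∩ (c ×ˢ (Set.univ : Set V)) = s then h.choose else ∅

lemma myWit_spec {A : Set (Set (V × V))} {c : Set V} {s : Set (V × V)}
    (h : ∃ p ∈ A, p ∩ (c ×ˢ (Set.univ : Set V)) = s) :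
    myWit A c s ∈ A ∧ myWit A c s ∩ (c ×ˢ (Set.univ : Set V)) = s := by
  rw [myWit, dif_pos h]
  exact h.choose_spec

/-- All pairs `(a,b)` with `a ∈ c`, `b ∈ F a`. -/
def myT (F : V → Set V) (c : Set V) : Set (V × V) := ⋃ a ∈ c, {a} ×ˢ F a

lemma myT_countable {F : V → Set V} (hF : ∀ a, (F a).Countable) {c : Set V}
    (hc : c.Countable) : (myT F c).Countable :=
  hc.biUnion fun a _ => (countable_singleton a).prod (hF a)

lemma mem_myT {F : V → Set V} {c : Set V} {a b : V} :
    (a, b) ∈ myT F c ↔ a ∈ c ∧ b ∈ F a := by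
  simp [myT]

/-- One closure step. -/
noncomputable def myPhi (A : Set (Set (V × V))) (F : V → Set V) (S : Set V) : Set V :=
  S ∪ ⋃ (c : {c : Set V // c ⊆ S ∧ c.Countable})
        (s : {s : Set (V × V) // s ⊆ myT F c.1}), pdom (myWit A c.1 s.1)

lemma subset_myPhi (A : Set (Set (V × V))) (F : V → Set V) (S : Set V) :
    S ⊆ myPhi A F S := subset_union_left

lemma wit_pdom_subset_myPhi (A : Set (Set (V × V))) (F : V → Set V) {S c : Set V}
    (hcS : c ⊆ S) (hcC : c.Countable) {s : Set (V × V)} (hs : s ⊆ myT F c) :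
    pdom (myWit A c s) ⊆ myPhi A F S := by
  intro x hx
  refine Or.inr ?_
  exact mem_iUnion.mpr ⟨⟨c, hcS, hcC⟩, mem_iUnion.mpr ⟨⟨s, hs⟩, hx⟩⟩

lemma pdom_myWit_countable {G : SimpleGraph V} [LinearOrder V] {F : V → Set V}
    {A : Set (Set (V × V))} (hA : ∀ p ∈ A, IsCondition G F p) (c : Set V)
    (s : Set (V × V)) : (pdom (myWit A c s)).Countable := by
  by_cases h : ∃ p ∈ A, p ∩ (c ×ˢ (Set.univ : Set V)) = s
  · exact ((hA _ (myWit_spec h).1).2.1)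
  · rw [myWit, dif_neg h]
    convert Set.countable_empty
    ext a; simp [pdom]

lemma mk_myPhi_le [LinearOrder V] {G : SimpleGraph V} {F : V → Set V}
    {A : Set (Set (V × V))} (hA : ∀ p ∈ A, IsCondition G F p)
    (hFc : ∀ a, (F a).Countable)
    (hCH : (2:Cardinal.{0}) ^ ℵ₀ = Cardinal.aleph 1)
    {S : Set V} (hS : #S ≤ Cardinal.aleph 1) :
    #(myPhi A F S) ≤ Cardinal.aleph 1 := by
  have h1 : ℵ₀ ≤ Cardinal.aleph 1 := aleph0_le_aleph 1
  refine (mk_union_le _ _).trans ?_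
  have hU : #(⋃ (c : {c : Set V // c ⊆ S ∧ c.Countable})
        (s : {s : Set (V × V) // s ⊆ myT F c.1}), pdom (myWit A c.1 s.1)) ≤
      Cardinal.aleph 1 := by
    refine (mk_iUnion_le _).trans ?_
    have hidx : #{c : Set V // c ⊆ S ∧ c.Countable} ≤ Cardinal.aleph 1 :=
      my_mk_countable_subsets_le hCH S hS
    have hsup : (⨆ (c : {c : Set V // c ⊆ S ∧ c.Countable}),
        #(⋃ (s : {s : Set (V × V) // s ⊆ myT F c.1}), pdom (myWit A c.1 s.1))) ≤
        Cardinal.aleph 1 := by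
      refine ciSup_le' fun c => ?_
      refine (mk_iUnion_le _).trans ?_
      have hsc : #{s : Set (V × V) // s ⊆ myT F c.1} ≤ Cardinal.aleph 1 := by
        have heq : #{s : Set (V × V) // s ⊆ myT F c.1} = 2 ^ #(myT F c.1) :=
          mk_powerset (myT F c.1)
        rw [heq]
        calc (2:Cardinal) ^ #(myT F c.1) ≤ 2 ^ (ℵ₀ : Cardinal) := by
              apply power_le_power_left two_ne_zero
              exact (myT_countable hFc c.2.2).le_aleph0
          _ = Cardinal.aleph 1 := hCH
      have hsup2 : (⨆ (s : {s : Set (V × V) // s ⊆ myT F c.1}),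
          #(pdom (myWit A c.1 s.1))) ≤ Cardinal.aleph 1 :=
        ciSup_le' fun s => (pdom_myWit_countable hA c.1 s.1).le_aleph0.trans h1
      exact le_trans (mul_le_mul' hsc hsup2) (mul_eq_self h1).le
    exact le_trans (mul_le_mul' hidx hsup) (mul_eq_self h1).le
  calc #S + _ ≤ Cardinal.aleph 1 + Cardinal.aleph 1 := add_le_add hS hU
    _ = Cardinal.aleph 1 := add_eq_self h1

/-- The `ω₁`-chain of closures. -/
noncomputable def myG (A : Set (Set (V × V))) (F : V → Set V)
    (i : (Cardinal.aleph.{0} 1).ord.ToType) : Set V :=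
  myPhi A F (⋃ j : {j // j < i}, myG A F j.1)
termination_by i
decreasing_by exact j.2

lemma myG_eq (A : Set (Set (V × V))) (F : V → Set V)
    (i : (Cardinal.aleph.{0} 1).ord.ToType) :
    myG A F i = myPhi A F (⋃ j : {j // j < i}, myG A F j.1) := by
  rw [myG]

lemma myG_mono (A : Set (Set (V × V))) (F : V → Set V)
    {j i : (Cardinal.aleph.{0} 1).ord.ToType} (h : j < i) :
    myG A F j ⊆ myG A F i := by
  rw [myG_eq A F i]
  refine subset_trans ?_ (subset_myPhi _ _ _)
  exact subset_iUnion_of_subset ⟨j, h⟩ subset_rfl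

lemma mk_Iio_toType_le (i : (Cardinal.aleph.{0} 1).ord.ToType) :
    #{j // j < i} ≤ ℵ₀ := by
  have h : #(Set.Iio i) < Cardinal.aleph 1 := mk_Iio_ord_toType i
  have h2 : (Set.Iio i).Countable := (countable_iff_lt_aleph_one _).mpr h
  exact h2.le_aleph0

lemma mk_myG_le [LinearOrder V] {G : SimpleGraph V} {F : V → Set V}
    {A : Set (Set (V × V))} (hA : ∀ p ∈ A, IsCondition G F p)
    (hFc : ∀ a, (F a).Countable)
    (hCH : (2:Cardinal.{0}) ^ ℵ₀ = Cardinal.aleph 1)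
    (i : (Cardinal.aleph.{0} 1).ord.ToType) : #(myG A F i) ≤ Cardinal.aleph 1 := by
  induction i using WellFoundedLT.induction with
  | ind i IH =>
    rw [myG_eq]
    apply mk_myPhi_le hA hFc hCH
    refine (mk_iUnion_le _).trans ?_
    have h1 : #{j // j < i} ≤ Cardinal.aleph 1 :=
      (mk_Iio_toType_le i).trans (aleph0_le_aleph 1)
    refine le_trans (mul_le_mul' h1 (ciSup_le' fun j => IH j.1 j.2)) ?_
    exact (mul_eq_self (aleph0_le_aleph 1)).le

/-- The closed set `W`. -/
noncomputable def myW (A : Set (Set (V × V))) (F : V → Set V) : Set V :=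
  ⋃ i, myG A F i

lemma mk_myW_le [LinearOrder V] {G : SimpleGraph V} {F : V → Set V}
    {A : Set (Set (V × V))} (hA : ∀ p ∈ A, IsCondition G F p)
    (hFc : ∀ a, (F a).Countable)
    (hCH : (2:Cardinal.{0}) ^ ℵ₀ = Cardinal.aleph 1) :
    #(myW A F) ≤ Cardinal.aleph 1 := by
  refine (mk_iUnion_le _).trans ?_
  have h1 : #((Cardinal.aleph.{0} 1).ord.ToType) = Cardinal.aleph 1 := by
    rw [Cardinal.mk_toType, Cardinal.card_ord]
  refine le_trans (mul_le_mul' h1.le (ciSup_le' fun i => mk_myG_le hA hFc hCH i)) ?_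
  exact (mul_eq_self (aleph0_le_aleph 1)).le

/-- Every countable subset of `ω₁` (as a type) is bounded. -/
lemma my_bounded (s : Set ((Cardinal.aleph.{0} 1).ord.ToType)) (hs : s.Countable) :
    ∃ i, ∀ x ∈ s, x < i := by
  have hcof : #s < Order.cof ((Cardinal.aleph.{0} 1).ord.ToType) := by
    rw [Ordinal.cof_toType, Cardinal.isRegular_aleph_one.cof_eq]
    exact (countable_iff_lt_aleph_one s).mp hs
  exact not_isCofinal_iff.mp fun h => (Order.cof_le h).not_gt hcof

/-- Closure property of `W`: witnesses of traces on countable subsets of `W`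
have their domains inside `W`. -/
lemma myW_closed [LinearOrder V] {G : SimpleGraph V} {F : V → Set V}
    {A : Set (Set (V × V))} (hA : ∀ p ∈ A, IsCondition G F p)
    {c : Set V} (hcW : c ⊆ myW A F) (hcC : c.Countable)
    {s : Set (V × V)} (hs : s ⊆ myT F c) :
    pdom (myWit A c s) ⊆ myW A F := by
  classical
  -- choose stages
  have hex : ∀ x : c, ∃ i, (x : V) ∈ myG A F i := fun x => mem_iUnion.mp (hcW x.2)
  choose idx hidx using hex
  have hrc : (Set.range idx).Countable := by
    haveI := hcC.to_subtype
    exact Set.countable_range idx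
  obtain ⟨i, hi⟩ := my_bounded (Set.range idx) hrc
  have hcU : c ⊆ ⋃ j : {j // j < i}, myG A F j.1 := by
    intro x hx
    exact mem_iUnion.mpr ⟨⟨idx ⟨x, hx⟩, hi _ (mem_range_self _)⟩, hidx ⟨x, hx⟩⟩
  have : pdom (myWit A c s) ⊆ myG A F i := by
    rw [myG_eq]
    exact wit_pdom_subset_myPhi A F hcU hcC hs
  exact this.trans (subset_iUnion _ i)

end Aux

/-- Assume CH, `X` a `κ`-nice graph, `F` an `ω`-assignment, and `ℙ = ℙ(X,F)`
the poset of countable good colorings with complete domains, ordered by reverse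
inclusion.  Then: (a) if `p ∪ q` is a function then it is a condition and is the
greatest lower bound of `p` and `q`; (b) `ℙ` satisfies the `ω₂`-c.c. -/
theorem poset_glb_and_cc {V : Type} [LinearOrder V] [WellFoundedLT V]
    (κ : Cardinal) (hκ : Cardinal.aleph 2 ≤ κ) (hCH : 2 ^ ℵ₀ = Cardinal.aleph 1)
    (hcard : #V = κ) (hseg : ∀ a : V, #{b : V | b < a} < κ)
    (G : SimpleGraph V)
    (hnice1 : colNum G ≤ Cardinal.aleph 1)
    (hnice2 : ∀ H : G.Subgraph, #H.verts = Cardinal.aleph 1 → colNum H.coe ≤ ℵ₀)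
    (hnice3 : ∀ a : V, #{b : V | G.Adj a b ∧ b < a} ≤ ℵ₀)
    (F : V → Set V) (hF : ∀ a : V, (F a).Countable ∧ (F a).Infinite) :
    (∀ p q : Set (V × V), IsCondition G F p → IsCondition G F q →
      (∀ a b b', (a, b) ∈ p ∪ q → (a, b') ∈ p ∪ q → b = b') →
      IsCondition G F (p ∪ q) ∧ p ⊆ p ∪ q ∧ q ⊆ p ∪ q ∧
        ∀ r : Set (V × V), IsCondition G F r → p ⊆ r → q ⊆ r → p ∪ q ⊆ r) ∧
    (∀ A : Set (Set (V × V)), (∀ p ∈ A, IsCondition G F p) →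
      (∀ p ∈ A, ∀ q ∈ A, p ≠ q → ¬∃ r, IsCondition G F r ∧ p ⊆ r ∧ q ⊆ r) →
      #A ≤ Cardinal.aleph 1) := by
  have hCH0 : (2 : Cardinal.{0}) ^ ℵ₀ = Cardinal.aleph 1 := myCH_zero hCH
  have hFc : ∀ a, (F a).Countable := fun a => (hF a).1
  constructor
  · -- part (a)
    intro p q hp hq hfun
    refine ⟨my_union_cond G F p q hp hq hfun, Set.subset_union_left,
      Set.subset_union_right, ?_⟩
    intro r _ hpr hqr
    exact Set.union_subset hpr hqr
  · -- part (b)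
    intro A hA hAC
    by_contra hbig
    obtain ⟨W, hWdef⟩ : ∃ W', W' = myW A F := ⟨_, rfl⟩
    have hWcard : #W ≤ Cardinal.aleph 1 := by
      rw [hWdef]; exact mk_myW_le hA hFc hCH0
    -- at most ℵ₁ conditions have domain ⊆ W
    have hsmall : #{p : Set (V × V) | p ⊆ myT F W ∧ p.Countable} ≤ Cardinal.aleph 1 := by
      apply my_mk_countable_subsets_le hCH0
      -- #(myT F W) ≤ ℵ₁
      have hsub : myT F W ⊆ ⋃ (a : W), ({(a:V)} ×ˢ F (a:V) : Set (V × V)) := by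
        rintro ⟨x, y⟩ hxy
        simp only [myT, Set.mem_iUnion] at hxy ⊢
        obtain ⟨a, ha, h⟩ := hxy
        exact ⟨⟨a, ha⟩, h⟩
      refine (Cardinal.mk_le_mk_of_subset hsub).trans ?_
      refine (Cardinal.mk_iUnion_le _).trans ?_
      have hsup : (⨆ a : W, #(({(a:V)} ×ˢ F (a:V) : Set (V × V)))) ≤ Cardinal.aleph 1 :=
        ciSup_le' fun a =>
          (((Set.countable_singleton _).prod (hFc _)).le_aleph0).trans (aleph0_le_aleph 1)
      exact le_trans (mul_le_mul' hWcard hsup) (mul_eq_self (aleph0_le_aleph 1)).le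
    -- find q ∈ A whose domain is not contained in W
    have hqex : ∃ q ∈ A, ¬ pdom q ⊆ W := by
      by_contra h
      push_neg at h
      apply hbig
      have hsub : A ⊆ {p : Set (V × V) | p ⊆ myT F W ∧ p.Countable} := by
        intro p hpA
        refine ⟨?_, my_cond_countable (hA p hpA)⟩
        rintro ⟨a, b⟩ hab
        exact mem_myT.mpr ⟨h p hpA ⟨b, hab⟩, (hA p hpA).2.2.2.1 a b hab⟩
      exact (Cardinal.mk_le_mk_of_subset hsub).trans hsmall
    obtain ⟨q, hqA, hqW⟩ := hqex
    -- the trace of q on W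
    have hcC : (pdom q ∩ W).Countable := ((hA q hqA).2.1).mono Set.inter_subset_left
    have hcW : pdom q ∩ W ⊆ myW A F := hWdef ▸ Set.inter_subset_right
    have hsT : q ∩ ((pdom q ∩ W) ×ˢ (Set.univ : Set V)) ⊆ myT F (pdom q ∩ W) := by
      rintro ⟨a, b⟩ ⟨h1, h2, -⟩
      exact mem_myT.mpr ⟨h2, (hA q hqA).2.2.2.1 a b h1⟩
    have hex : ∃ p ∈ A, p ∩ ((pdom q ∩ W) ×ˢ (Set.univ : Set V)) =
        q ∩ ((pdom q ∩ W) ×ˢ (Set.univ : Set V)) := ⟨q, hqA, rfl⟩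
    obtain ⟨hpA, hps⟩ := myWit_spec hex
    have hpW : pdom (myWit A (pdom q ∩ W) (q ∩ ((pdom q ∩ W) ×ˢ (Set.univ : Set V)))) ⊆ W := by
      have := myW_closed hA hcW hcC hsT
      rwa [← hWdef] at this
    set p := myWit A (pdom q ∩ W) (q ∩ ((pdom q ∩ W) ×ˢ (Set.univ : Set V))) with hpdef
    have hpq : p ≠ q := by
      intro h
      exact hqW (h ▸ hpW)
    -- p ∪ q is a function
    have hfun : ∀ a b b', (a, b) ∈ p ∪ q → (a, b') ∈ p ∪ q → b = b' := by
      have key : ∀ a b b', (a, b) ∈ p → (a, b') ∈ q → b = b' := by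
        intro a b b' hbp hb'q
        have hac : a ∈ pdom q ∩ W := ⟨⟨b', hb'q⟩, hpW ⟨b, hbp⟩⟩
        have hmem : (a, b) ∈ q ∩ ((pdom q ∩ W) ×ˢ (Set.univ : Set V)) := by
          rw [← hps]
          exact ⟨hbp, hac, Set.mem_univ _⟩
        exact (hA q hqA).1 a b b' hmem.1 hb'q
      rintro a b b' (h1 | h1) (h2 | h2)
      · exact (hA p hpA).1 a b b' h1 h2
      · exact key a b b' h1 h2
      · exact (key a b' b h2 h1).symm
      · exact (hA q hqA).1 a b b' h1 h2
    exact hAC p hpA q hqA hpq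
      ⟨p ∪ q, my_union_cond G F p q (hA p hpA) (hA q hqA) hfun,
        Set.subset_union_left, Set.subset_union_right⟩
end

section
/- Assume CH and let ℙ = ℙ(X, F) be the poset of countable good partial colorings of a κ-nice graph X with complete countable domains and values in the lists F(α). For every p ∈ ℙ and every countable ⟨X,F⟩-complete set x ⊇ dom(p), there is q ∈ ℙ with q ≤ p and dom(q) = x. -/
open Cardinal

noncomputable def crec {V : Type} [Nonempty V] (step : ℕ → (ℕ → V) → V) : ℕ → V
  | n => step n (fun m => if h : m < n then crec step m else Classical.arbitrary V)
  termination_by n => n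
  decreasing_by exact h

theorem crec_eq {V : Type} [Nonempty V] (step : ℕ → (ℕ → V) → V) (n : ℕ) :
    crec step n = step n (fun m => if h : m < n then crec step m else Classical.arbitrary V) := by
  rw [crec]

theorem condition_extension' {V : Type} [LinearOrder V]
    (G : SimpleGraph V)
    (F : V → Set V) (hF : ∀ a : V, (F a).Countable ∧ (F a).Infinite) :
    ∀ p : Set (V × V), IsCondition G F p →
      ∀ x : Set V, x.Countable → XFComplete G F x → pdom p ⊆ x →
        ∃ q : Set (V × V), IsCondition G F q ∧ p ⊆ q ∧ pdom q = x := by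
  classical
  intro p hp x hxc hxcomp hsub
  obtain ⟨hfun, hcnt, hcompD, hval, hgood⟩ := hp
  set D := pdom p with hD
  by_cases hs : (x \ D).Nonempty
  · haveI : Nonempty V := ⟨hs.some⟩
    obtain ⟨e, he⟩ := ((hxc.mono Set.diff_subset).exists_eq_range hs)
    have hes : ∀ n, e n ∈ x \ D := fun n => he ▸ Set.mem_range_self n
    -- the partial function coded by p
    set pf : V → V := fun a => if h : a ∈ D then h.choose else a with hpfdef
    have hpf : ∀ a, a ∈ D → (a, pf a) ∈ p := by
      intro a h
      simp only [hpfdef, dif_pos h]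
      exact h.choose_spec
    have hpf' : ∀ a b, (a, b) ∈ p → b = pf a :=
      fun a b hab => hfun a b (pf a) hab (hpf a ⟨b, hab⟩)
    -- forbidden sets and recursive color choice
    set Forb : ℕ → (ℕ → V) → Set V := fun n prev =>
      pf '' {b | b ∈ D ∧ G.Adj (e n) b} ∪ prev '' {m | m < n ∧ G.Adj (e n) (e m)}
      with hForbdef
    set step : ℕ → (ℕ → V) → V := fun n prev =>
      if h : (F (e n) \ Forb n prev).Nonempty then h.some else e 0 with hstepdef
    set c : ℕ → V := crec step with hcdef
    have hN : ∀ n, {b | b ∈ D ∧ G.Adj (e n) b}.Finite := by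
      intro n
      by_contra hinf
      have hinf' : {b | b ∈ D ∧ G.Adj (e n) b}.Infinite := hinf
      have : (D ∩ {c' | G.Adj (e n) c'}).Infinite := by
        refine hinf'.mono ?_
        intro b hb
        exact ⟨hb.1, hb.2⟩
      exact (hes n).2 (hcompD.2 (e n) this)
    have hckey : ∀ n, c n ∈ F (e n) \ Forb n c := by
      intro n
      have h1 : Forb n (fun m => if h : m < n then c m else Classical.arbitrary V)
          = Forb n c := by
        simp only [hForbdef]
        congr 1
        apply Set.image_congr
        rintro m ⟨hm, -⟩
        simp [hm]
      have hfin : (Forb n c).Finite := by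
        apply Set.Finite.union
        · exact (hN n).image pf
        · exact (((Set.finite_Iio n).subset (fun m hm => hm.1)).image c)
      have hne : (F (e n) \ Forb n c).Nonempty := ((hF (e n)).2.diff hfin).nonempty
      have : c n = step n (fun m => if h : m < n then c m else Classical.arbitrary V) :=
        crec_eq step n
      rw [this]
      simp only [hstepdef, h1, dif_pos hne]
      exact hne.some_mem
    -- the extension
    set q : Set (V × V) :=
      p ∪ {pr : V × V | ∃ n : ℕ, pr = (e n, c n) ∧ ∀ m, m < n → e m ≠ e n} with hqdef
    have hqnew : ∀ a b, (a, b) ∈ q → (a, b) ∈ p ∨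
        ∃ n : ℕ, a = e n ∧ b = c n ∧ ∀ m, m < n → e m ≠ e n := by
      rintro a b (h | ⟨n, hn, hmin⟩)
      · exact Or.inl h
      · exact Or.inr ⟨n, (Prod.mk.injEq _ _ _ _ ▸ hn).1, (Prod.mk.injEq _ _ _ _ ▸ hn).2, hmin⟩
    have hdomq : pdom q = x := by
      ext a
      constructor
      · rintro ⟨b, hb⟩
        rcases hqnew a b hb with h | ⟨n, rfl, -, -⟩
        · exact hsub ⟨b, h⟩
        · exact (hes n).1
      · intro ha
        by_cases haD : a ∈ D
        · exact ⟨pf a, Or.inl (hpf a haD)⟩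
        · have : a ∈ Set.range e := he ▸ ⟨ha, haD⟩
          obtain ⟨n, hn⟩ := this
          have hex : ∃ m, e m = a := ⟨n, hn⟩
          refine ⟨c (Nat.find hex), Or.inr ⟨Nat.find hex, ?_, ?_⟩⟩
          · rw [Nat.find_spec hex]
          · intro m hm hme
            exact Nat.find_min hex hm (hme.trans (Nat.find_spec hex))
    -- q is not reflexive on new-vs-new colors
    have hnewnew : ∀ n n', n' < n → G.Adj (e n) (e n') → c n ≠ c n' := by
      intro n n' hlt hadj heq
      apply (hckey n).2
      refine Or.inr ⟨n', ⟨hlt, hadj⟩, heq.symm⟩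
    have hnewold : ∀ n a', a' ∈ D → G.Adj (e n) a' → c n ≠ pf a' := by
      intro n a' ha' hadj heq
      apply (hckey n).2
      exact Or.inl ⟨a', ⟨ha', hadj⟩, heq.symm⟩
    refine ⟨q, ⟨?_, ?_, ?_, ?_, ?_⟩, Set.subset_union_left, hdomq⟩
    · -- functional
      intro a b b' hab hab'
      rcases hqnew a b hab with h | ⟨n, rfl, rfl, hmin⟩
      · rcases hqnew a b' hab' with h' | ⟨n', he', rfl, -⟩
        · exact hfun a b b' h h'
        · exact absurd ((hes n').2) (fun hh => hh (he' ▸ ⟨b, h⟩))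
      · rcases hqnew _ b' hab' with h' | ⟨n', he', rfl, hmin'⟩
        · exact absurd ((hes n).2) (fun hh => hh ⟨b', h'⟩)
        · have : n = n' := by
            rcases lt_trichotomy n n' with h | h | h
            · exact absurd he' (hmin' n h)
            · exact h
            · exact absurd he'.symm (hmin n' h)
          rw [this]
    · rw [hdomq]; exact hxc
    · rw [hdomq]; exact hxcomp
    · intro a b hab
      rcases hqnew a b hab with h | ⟨n, rfl, rfl, -⟩
      · exact hval a b h
      · exact (hckey n).1
    · -- good coloring
      intro a b a' b' hab hab' hadj
      rcases hqnew a b hab with h | ⟨n, rfl, rfl, -⟩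
      · rcases hqnew a' b' hab' with h' | ⟨n', rfl, rfl, -⟩
        · exact hgood a b a' b' h h' hadj
        · have : b = pf a := hpf' a b h
          rw [this]
          exact (hnewold n' a ⟨b, h⟩ hadj.symm).symm
      · rcases hqnew a' b' hab' with h' | ⟨n', rfl, rfl, -⟩
        · have : b' = pf a' := hpf' a' b' h'
          rw [this]
          exact hnewold n a' ⟨b', h'⟩ hadj
        · rcases lt_trichotomy n n' with h | h | h
          · exact (hnewnew n' n h hadj.symm).symm
          · exact absurd (h ▸ hadj) (G.irrefl)
          · exact hnewnew n n' h hadj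
  · have hxD : x = D := by
      apply subset_antisymm _ hsub
      intro a ha
      by_contra haD
      exact hs ⟨a, ha, haD⟩
    exact ⟨p, ⟨hfun, hcnt, hcompD, hval, hgood⟩, subset_rfl, hxD.symm⟩

/-- Assume CH, `X` a `κ`-nice graph, `F` an `ω`-assignment, and `ℙ = ℙ(X,F)` as
above.  For every condition `p` and every countable `⟨X,F⟩`-complete set
`x ⊇ dom(p)`, there is a condition `q ≤ p` with `dom(q) = x`. -/
theorem condition_extension {V : Type} [LinearOrder V] [WellFoundedLT V]
    (κ : Cardinal) (hκ : Cardinal.aleph 2 ≤ κ) (hCH : 2 ^ ℵ₀ = Cardinal.aleph 1)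
    (hcard : #V = κ) (hseg : ∀ a : V, #{b : V | b < a} < κ)
    (G : SimpleGraph V)
    (hnice1 : colNum G ≤ Cardinal.aleph 1)
    (hnice2 : ∀ H : G.Subgraph, #H.verts = Cardinal.aleph 1 → colNum H.coe ≤ ℵ₀)
    (hnice3 : ∀ a : V, #{b : V | G.Adj a b ∧ b < a} ≤ ℵ₀)
    (F : V → Set V) (hF : ∀ a : V, (F a).Countable ∧ (F a).Infinite) :
    ∀ p : Set (V × V), IsCondition G F p →
      ∀ x : Set V, x.Countable → XFComplete G F x → pdom p ⊆ x →
        ∃ q : Set (V × V), IsCondition G F q ∧ p ⊆ q ∧ pdom q = x := by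
  exact condition_extension' G F hF
end
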